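/- Let n ≥ 1 and let V ⊆ ℂⁿ ⊕ ℂⁿ be a maximal isotropic subspace (isotropic of dimension n for B). Then the joint kernel {w ∈ Λ(ℂⁿ) : d_{(β,γ)} w = 0 for every (β,γ) ∈ V} is a one-dimensional ℂ-vector subspace of Λ(ℂⁿ). -/

import Mathlib

open Matrix

noncomputable section

/-- The symmetric bilinear form `B((β,γ),(β',γ')) = Σ_t (β_t γ'_t + β'_t γ_t)` on `ℂⁿ ⊕ ℂⁿ`. -/
def Bform (n : ℕ) (p q : (Fin n → ℂ) × (Fin n → ℂ)) : ℂ :=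
  ∑ t, (p.1 t * q.2 t + q.1 t * p.2 t)

/-- The Grassmann (exterior) algebra `Λ(ℂⁿ)` on `n` generators. -/
abbrev GA (n : ℕ) := ExteriorAlgebra ℂ (Fin n → ℂ)

/-- `x_t` : left exterior multiplication by the `t`-th standard basis vector `e_t`. -/
noncomputable def Xop (n : ℕ) (t : Fin n) : GA n →ₗ[ℂ] GA n :=
  LinearMap.mulLeft ℂ (ExteriorAlgebra.ι ℂ (Pi.single t 1))

/-- `∂_t` : left interior multiplication (contraction) with the `t`-th dual basis vector. -/
noncomputable def Dop (n : ℕ) (t : Fin n) : GA n →ₗ[ℂ] GA n :=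
  CliffordAlgebra.contractLeft (LinearMap.proj t)

/-- The operator `d_{(β,γ)} = Σ_t (β_t ∂_t + γ_t x_t)` on `Λ(ℂⁿ)`. -/
noncomputable def dOp (n : ℕ) (p : (Fin n → ℂ) × (Fin n → ℂ)) : GA n →ₗ[ℂ] GA n :=
  ∑ t, (p.1 t • Dop n t + p.2 t • Xop n t)

/-! ### Auxiliary machinery -/

open Module LinearMap

/-- If `a b` are endomorphisms with `ab + ba = 1`, `a² = 0`, `b² = 0`, then
`ker a` is half of the space. -/
theorem aux_halving {M : Type*} [AddCommGroup M] [Module ℂ M] [FiniteDimensional ℂ M]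
    {a b : M →ₗ[ℂ] M} (hab : ∀ x, a (b x) + b (a x) = x)
    (ha : ∀ x, a (a x) = 0) (hb : ∀ x, b (b x) = 0) :
    2 * finrank ℂ (LinearMap.ker a) = finrank ℂ M := by
  have hcompl : IsCompl (LinearMap.ker a) (LinearMap.ker b) := by
    constructor
    · rw [disjoint_iff_inf_le]
      rintro x ⟨hxa, hxb⟩
      simp only [SetLike.mem_coe, LinearMap.mem_ker] at hxa hxb
      have := hab x
      rw [hxa, hxb, map_zero, map_zero, add_zero] at this
      simpa using this.symm
    · rw [codisjoint_iff_le_sup]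
      intro x _
      exact Submodule.mem_sup.2 ⟨a (b x), by simp [LinearMap.mem_ker, ha], b (a x),
        by simp [LinearMap.mem_ker, hb], hab x⟩
  have hmapsto : ∀ x ∈ LinearMap.ker b, a x ∈ LinearMap.ker a := by
    intro x _; simp [LinearMap.mem_ker, ha]
  have hinj : Function.Injective (a.restrict hmapsto) := by
    rw [← LinearMap.ker_eq_bot]
    ext z
    simp only [LinearMap.mem_ker, Submodule.mem_bot]
    constructor
    · intro hz
      have hz' : a (z : M) = 0 := congrArg Subtype.val hz
      have h2 := hab (z : M)
      rw [LinearMap.mem_ker.1 z.2, map_zero, zero_add, hz', map_zero] at h2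
      exact Subtype.ext h2.symm
    · intro hz; rw [hz]; simp
  have hsurj : Function.Surjective (a.restrict hmapsto) := by
    rintro ⟨u, hu⟩
    refine ⟨⟨b u, by simp [LinearMap.mem_ker, hb]⟩, ?_⟩
    have h2 := hab u
    rw [(LinearMap.mem_ker.1 hu : a u = 0), map_zero, add_zero] at h2
    exact Subtype.ext (by simpa [LinearMap.restrict_apply] using h2)
  have heq : finrank ℂ (LinearMap.ker b) = finrank ℂ (LinearMap.ker a) :=
    (LinearEquiv.ofBijective _ ⟨hinj, hsurj⟩).finrank_eq
  have := Submodule.finrank_add_eq_of_isCompl hcompl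
  omega

/-- CAR dimension-counting: a family of fermionic annihilation/creation operator pairs halves
the dimension once for each index. -/
theorem aux_car_finrank {M : Type*} [AddCommGroup M] [Module ℂ M] [FiniteDimensional ℂ M]
    {m : ℕ} (a b : Fin m → (M →ₗ[ℂ] M))
    (haa : ∀ i j x, a i (a j x) + a j (a i x) = 0)
    (hbb : ∀ i x, b i (b i x) = 0)
    (hab : ∀ i j x, a i (b j x) + b j (a i x) = if i = j then x else 0) :
    finrank ℂ M = 2 ^ m * finrank ℂ ↥(⨅ i, LinearMap.ker (a i)) := by
  classical
  have key : ∀ s : Finset (Fin m),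
      finrank ℂ M = 2 ^ s.card * finrank ℂ ↥(⨅ i ∈ s, LinearMap.ker (a i)) := by
    intro s
    induction s using Finset.induction_on with
    | empty =>
      rw [show (⨅ i ∈ (∅ : Finset (Fin m)), LinearMap.ker (a i)) = ⊤ by simp]
      simp [finrank_top]
    | @insert i s his ih =>
      set K : Submodule ℂ M := ⨅ j ∈ s, LinearMap.ker (a j) with hK
      have memK : ∀ x, x ∈ K ↔ ∀ j ∈ s, a j x = 0 := by
        intro x; simp [hK, LinearMap.mem_ker]
      have hKa : ∀ x ∈ K, a i x ∈ K := by
        intro x hx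
        rw [memK] at hx ⊢
        intro j hj
        have h1 := haa j i x
        rw [hx j hj, map_zero, add_zero] at h1
        exact h1
      have hKb : ∀ x ∈ K, b i x ∈ K := by
        intro x hx
        rw [memK] at hx ⊢
        intro j hj
        have hji : ¬ (j = i) := fun h => his (h ▸ hj)
        have h1 := hab j i x
        rw [if_neg hji, hx j hj, map_zero, add_zero] at h1
        exact h1
      set A := (a i).restrict hKa
      set B := (b i).restrict hKb
      have h2 : 2 * finrank ℂ (LinearMap.ker A) = finrank ℂ ↥K := by
        apply aux_halving (b := B)
        · intro x
          apply Subtype.ext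
          have := hab i i (x : M)
          rw [if_pos rfl] at this
          simpa [A, B, LinearMap.restrict_apply] using this
        · intro x
          apply Subtype.ext
          have h1 := haa i i (x : M)
          have h2 : a i (a i (x : M)) = 0 := by
            have : (2 : ℂ) • a i (a i (x : M)) = 0 := by
              rw [two_smul]; exact h1
            simpa using (smul_eq_zero.1 this).resolve_left (by norm_num)
          simpa [A, LinearMap.restrict_apply] using h2
        · intro x
          apply Subtype.ext
          simpa [B, LinearMap.restrict_apply] using hbb i (x : M)
      have hkerA : finrank ℂ ↥(LinearMap.ker A) =
          finrank ℂ ↥(LinearMap.ker (a i) ⊓ K) := by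
        rw [show LinearMap.ker A = Submodule.comap K.subtype (LinearMap.ker (a i)) from
          LinearMap.ker_restrict hKa]
        rw [show LinearMap.ker (a i) ⊓ K = K ⊓ LinearMap.ker (a i) from inf_comm _ _]
        rw [← Submodule.map_comap_subtype]
        exact (Submodule.equivMapOfInjective K.subtype (Submodule.injective_subtype K)
          _).finrank_eq
      have hins : (⨅ j ∈ insert i s, LinearMap.ker (a j)) = LinearMap.ker (a i) ⊓ K := by
        rw [hK]
        exact Finset.iInf_insert i s fun j => LinearMap.ker (a j)
      rw [Finset.card_insert_of_notMem his, hins, ← hkerA, pow_succ]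
      rw [ih, ← h2]
      ring
  have := key Finset.univ
  have h1 : (⨅ i ∈ Finset.univ, LinearMap.ker (a i)) = ⨅ i, LinearMap.ker (a i) := by simp
  rw [h1, Finset.card_univ, Fintype.card_fin] at this
  exact this

/-! ### Anticommutation relations -/

lemma aux_DD (n : ℕ) (t s : Fin n) (x : GA n) :
    Dop n t (Dop n s x) + Dop n s (Dop n t x) = 0 := by
  rw [Dop, Dop, CliffordAlgebra.contractLeft_comm]
  simp

lemma aux_XX (n : ℕ) (t s : Fin n) (x : GA n) :
    Xop n t (Xop n s x) + Xop n s (Xop n t x) = 0 := by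
  simp only [Xop, LinearMap.mulLeft_apply, ← mul_assoc, ← add_mul]
  rw [CliffordAlgebra.ι_mul_ι_add_swap]
  simp [QuadraticMap.polar]

lemma aux_DX (n : ℕ) (t s : Fin n) (x : GA n) :
    Dop n t (Xop n s x) + Xop n s (Dop n t x) = (if s = t then (1:ℂ) else 0) • x := by
  simp only [Dop, Xop, LinearMap.mulLeft_apply]
  rw [CliffordAlgebra.contractLeft_ι_mul]
  have : (LinearMap.proj t : (Fin n → ℂ) →ₗ[ℂ] ℂ) (Pi.single s 1) = if s = t then 1 else 0 := by
    simp [Pi.single_apply, eq_comm]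
  rw [this]
  ring_nf
  abel

lemma aux_DDe (n : ℕ) (t s : Fin n) : Dop n t * Dop n s + Dop n s * Dop n t = 0 :=
  LinearMap.ext fun x => aux_DD n t s x
lemma aux_XXe (n : ℕ) (t s : Fin n) : Xop n t * Xop n s + Xop n s * Xop n t = 0 :=
  LinearMap.ext fun x => aux_XX n t s x
lemma aux_DXe (n : ℕ) (t s : Fin n) :
    Dop n t * Xop n s + Xop n s * Dop n t = (if s = t then (1:ℂ) else 0) • 1 :=
  LinearMap.ext fun x => aux_DX n t s x

lemma aux_atomic (n : ℕ) (t s : Fin n) (α β γ δ : ℂ) :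
    (α • Dop n t + β • Xop n t) * (γ • Dop n s + δ • Xop n s)
      + (γ • Dop n s + δ • Xop n s) * (α • Dop n t + β • Xop n t)
      = ((α * δ + γ * β) * (if s = t then (1:ℂ) else 0)) • 1 := by
  have e1 : Dop n s * Dop n t = -(Dop n t * Dop n s) :=
    eq_neg_of_add_eq_zero_left (by rw [add_comm]; exact aux_DDe n t s)
  have e2 : Xop n s * Xop n t = -(Xop n t * Xop n s) :=
    eq_neg_of_add_eq_zero_left (by rw [add_comm]; exact aux_XXe n t s)
  have e3 : Xop n s * Dop n t = (if s = t then (1:ℂ) else 0) • 1 - Dop n t * Xop n s :=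
    eq_sub_of_add_eq (by rw [add_comm]; exact aux_DXe n t s)
  have e4 : Dop n s * Xop n t = (if s = t then (1:ℂ) else 0) • 1 - Xop n t * Dop n s := by
    refine eq_sub_of_add_eq ?_
    rw [show (if s = t then (1:ℂ) else 0) = (if t = s then (1:ℂ) else 0) by simp [eq_comm]]
    exact aux_DXe n s t
  simp only [add_mul, mul_add, smul_mul_assoc, mul_smul_comm, e1, e2, e3, e4]
  match_scalars <;> ring

lemma aux_dAntiEnd (n : ℕ) (p q : (Fin n → ℂ) × (Fin n → ℂ)) :
    dOp n p * dOp n q + dOp n q * dOp n p = Bform n p q • 1 := by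
  rw [dOp, dOp, Finset.sum_mul_sum, Finset.sum_mul_sum]
  rw [Finset.sum_comm (s := Finset.univ) (t := Finset.univ)
    (f := fun t s => (q.1 t • Dop n t + q.2 t • Xop n t) * (p.1 s • Dop n s + p.2 s • Xop n s))]
  rw [← Finset.sum_add_distrib]
  have : ∀ t : Fin n,
      ∑ s, ((p.1 t • Dop n t + p.2 t • Xop n t) * (q.1 s • Dop n s + q.2 s • Xop n s))
      + ∑ s, ((q.1 s • Dop n s + q.2 s • Xop n s) * (p.1 t • Dop n t + p.2 t • Xop n t))
      = (p.1 t * q.2 t + q.1 t * p.2 t) • 1 := by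
    intro t
    rw [← Finset.sum_add_distrib]
    have h : ∀ s : Fin n,
        (p.1 t • Dop n t + p.2 t • Xop n t) * (q.1 s • Dop n s + q.2 s • Xop n s)
        + (q.1 s • Dop n s + q.2 s • Xop n s) * (p.1 t • Dop n t + p.2 t • Xop n t)
        = ((p.1 t * q.2 s + q.1 s * p.2 t) * (if s = t then (1:ℂ) else 0)) • 1 :=
      fun s => aux_atomic n t s (p.1 t) (p.2 t) (q.1 s) (q.2 s)
    rw [Finset.sum_congr rfl fun s _ => h s]
    simp [mul_ite, ite_smul, Finset.sum_ite_eq]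
  rw [Finset.sum_congr rfl fun t _ => this t, Bform, Finset.sum_smul]

lemma aux_dAnti (n : ℕ) (p q : (Fin n → ℂ) × (Fin n → ℂ)) (x : GA n) :
    dOp n p (dOp n q x) + dOp n q (dOp n p x) = Bform n p q • x := by
  have h := LinearMap.ext_iff.1 (aux_dAntiEnd n p q) x
  simpa [Module.End.mul_apply] using h

/-! ### A spanning family of size `2 ^ n` -/

noncomputable def eA (n : ℕ) (i : Fin n) : GA n := ExteriorAlgebra.ι ℂ (Pi.single i 1)

noncomputable def wl (n : ℕ) : List (Fin n) → GA n
  | [] => 1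
  | a :: l => eA n a * wl n l

lemma eA_anti (n : ℕ) (t a : Fin n) : eA n t * eA n a = -(eA n a * eA n t) := by
  refine eq_neg_of_add_eq_zero_left ?_
  rw [add_comm, eA, eA, CliffordAlgebra.ι_mul_ι_add_swap]
  simp [QuadraticMap.polar]

lemma eA_mul_wl (n : ℕ) : ∀ (l : List (Fin n)), l.Pairwise (· < ·) → ∀ t : Fin n,
    ∃ (c : ℂ) (m : List (Fin n)), m.Pairwise (· < ·) ∧ (∀ x ∈ m, x = t ∨ x ∈ l) ∧
      eA n t * wl n l = c • wl n m := by
  intro l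
  induction l with
  | nil =>
    intro _ t
    exact ⟨1, [t], List.pairwise_singleton _ t, by simp, by simp [wl]⟩
  | cons a l ih =>
    intro h t
    rw [List.pairwise_cons] at h
    obtain ⟨ha, hl⟩ := h
    rcases lt_trichotomy t a with htlt | hteq | htgt
    · refine ⟨1, t :: a :: l, ?_, ?_, by simp [wl]⟩
      · rw [List.pairwise_cons]
        refine ⟨?_, List.pairwise_cons.2 ⟨ha, hl⟩⟩
        intro b hb
        rcases List.mem_cons.1 hb with rfl | hb
        · exact htlt
        · exact htlt.trans (ha b hb)
      · intro x hx
        rcases List.mem_cons.1 hx with rfl | hx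
        · exact Or.inl rfl
        · exact Or.inr hx
    · refine ⟨0, [], List.Pairwise.nil, by simp, ?_⟩
      subst hteq
      rw [show wl n (t :: l) = eA n t * wl n l from rfl, ← mul_assoc,
        show eA n t * eA n t = 0 from ExteriorAlgebra.ι_sq_zero _, zero_mul, zero_smul]
    · obtain ⟨c, m, hm, hsub, heq⟩ := ih hl t
      refine ⟨-c, a :: m, ?_, ?_, ?_⟩
      · rw [List.pairwise_cons]
        refine ⟨?_, hm⟩
        intro b hb
        rcases hsub b hb with rfl | hb
        · exact htgt
        · exact ha b hb
      · intro x hx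
        rcases List.mem_cons.1 hx with rfl | hx
        · exact Or.inr (List.mem_cons_self)
        · rcases hsub x hx with rfl | hx'
          · exact Or.inl rfl
          · exact Or.inr (List.mem_cons_of_mem _ hx')
      · rw [show wl n (a :: l) = eA n a * wl n l from rfl, ← mul_assoc, eA_anti, neg_mul,
          mul_assoc, heq, show wl n (a :: m) = eA n a * wl n m from rfl, mul_smul_comm, neg_smul]

noncomputable def spanSet (n : ℕ) : Submodule ℂ (GA n) :=
  Submodule.span ℂ (Set.range fun s : Finset (Fin n) => wl n (s.sort (· ≤ ·)))

lemma sorted_mem_spanSet (n : ℕ) (l : List (Fin n)) (h : l.Pairwise (· < ·)) :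
    wl n l ∈ spanSet n := by
  have hnd : l.Nodup := h.nodup
  have : Finset.sort l.toFinset (· ≤ ·) = l :=
    (List.toFinset_sort (· ≤ ·) hnd).2 (h.imp fun {a b} hab => le_of_lt hab)
  refine Submodule.subset_span ⟨l.toFinset, ?_⟩
  dsimp only
  rw [this]

lemma spanSet_eq_top (n : ℕ) : spanSet n = ⊤ := by
  have heA : ∀ (t : Fin n) (y : GA n), y ∈ spanSet n → eA n t * y ∈ spanSet n := by
    intro t y hy
    induction hy using Submodule.span_induction with
    | mem x hx =>
      obtain ⟨s, rfl⟩ := hx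
      obtain ⟨c, m, hm, _, heq⟩ := eA_mul_wl n (s.sort (· ≤ ·)) (List.sortedLT_iff_pairwise.1 (Finset.sortedLT_sort s)) t
      rw [heq]
      exact Submodule.smul_mem _ _ (sorted_mem_spanSet n m hm)
    | zero => simp
    | add x y _ _ hx hy => rw [mul_add]; exact Submodule.add_mem _ hx hy
    | smul c x _ hx => rw [mul_smul_comm]; exact Submodule.smul_mem _ _ hx
  have hmul : ∀ x : GA n, ∀ y ∈ spanSet n, x * y ∈ spanSet n := by
    intro x
    induction x using ExteriorAlgebra.induction with
    | algebraMap r =>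
      intro y hy
      rw [← Algebra.smul_def]
      exact Submodule.smul_mem _ _ hy
    | ι v =>
      intro y hy
      have hv : ExteriorAlgebra.ι ℂ v = ∑ t, v t • eA n t :=
        calc ExteriorAlgebra.ι ℂ v = ExteriorAlgebra.ι ℂ (∑ t, Pi.single t (v t)) := by
              rw [Finset.univ_sum_single]
          _ = ∑ t, ExteriorAlgebra.ι ℂ (Pi.single t (v t)) := map_sum _ _ _
          _ = ∑ t, v t • eA n t := Finset.sum_congr rfl fun t _ => by
              rw [eA, ← _root_.map_smul]
              congr 1
              funext j
              simp [Pi.single_apply]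
      rw [hv, Finset.sum_mul]
      refine Submodule.sum_mem _ fun t _ => ?_
      rw [smul_mul_assoc]
      exact Submodule.smul_mem _ _ (heA t y hy)
    | mul x y hx hy =>
      intro z hz
      rw [mul_assoc]
      exact hx _ (hy _ hz)
    | add x y hx hy =>
      intro z hz
      rw [add_mul]
      exact Submodule.add_mem _ (hx _ hz) (hy _ hz)
  rw [eq_top_iff]
  intro x _
  have h1 : (1 : GA n) ∈ spanSet n := sorted_mem_spanSet n [] List.Pairwise.nil
  simpa using hmul x 1 h1

instance GA.finiteDimensional (n : ℕ) : FiniteDimensional ℂ (GA n) :=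
  ⟨by rw [← spanSet_eq_top n, spanSet]; exact Submodule.fg_span (Set.finite_range _)⟩

lemma GA_finrank_le (n : ℕ) : finrank ℂ (GA n) ≤ 2 ^ n := by
  classical
  have h1 : finrank ℂ (GA n) = finrank ℂ ↥(spanSet n) := by
    rw [spanSet_eq_top n, finrank_top]
  rw [h1, spanSet]
  calc finrank ℂ ↥(Submodule.span ℂ (Set.range fun s : Finset (Fin n) => wl n (s.sort (· ≤ ·))))
      ≤ (Set.range fun s : Finset (Fin n) => wl n (s.sort (· ≤ ·))).toFinset.card :=
        finrank_span_le_card _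
    _ = Fintype.card ↑(Set.range fun s : Finset (Fin n) => wl n (s.sort (· ≤ ·))) :=
        Set.toFinset_card _
    _ ≤ Fintype.card (Finset (Fin n)) := Fintype.card_range_le _
    _ = 2 ^ n := by rw [Fintype.card_finset, Fintype.card_fin]

/-! ### The dimension of `Λ(ℂⁿ)` is exactly `2 ^ n` -/

lemma GA_finrank_eq (n : ℕ) : finrank ℂ (GA n) = 2 ^ n := by
  have hcar := aux_car_finrank (M := GA n) (Dop n) (Xop n)
    (fun i j x => aux_DD n i j x)
    (fun i x => by
      have h := aux_XX n i i x
      have h2 : (2 : ℂ) • Xop n i (Xop n i x) = 0 := by rw [two_smul]; exact h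
      simpa using (smul_eq_zero.1 h2).resolve_left (by norm_num))
    (fun i j x => by
      rw [aux_DX n i j x]
      by_cases h : i = j <;> simp [h, eq_comm])
  have h1mem : (1 : GA n) ∈ ⨅ i, LinearMap.ker (Dop n i) := by
    rw [Submodule.mem_iInf]
    intro i
    rw [LinearMap.mem_ker, Dop]
    exact CliffordAlgebra.contractLeft_one _ _
  have hpos : 0 < finrank ℂ ↥(⨅ i, LinearMap.ker (Dop n i)) := by
    rw [finrank_pos_iff]
    exact ⟨⟨1, h1mem⟩, 0, fun h => one_ne_zero (congrArg Subtype.val h)⟩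
  have hge : 2 ^ n ≤ finrank ℂ (GA n) := by
    rw [hcar]
    calc 2 ^ n = 2 ^ n * 1 := (mul_one _).symm
      _ ≤ 2 ^ n * finrank ℂ ↥(⨅ i, LinearMap.ker (Dop n i)) :=
          Nat.mul_le_mul_left _ hpos
  exact le_antisymm (GA_finrank_le n) hge

/-- `dOp` as a linear map in `p`. -/
noncomputable def dL (n : ℕ) : ((Fin n → ℂ) × (Fin n → ℂ)) →ₗ[ℂ] (GA n →ₗ[ℂ] GA n) where
  toFun := dOp n
  map_add' p q := by
    simp only [dOp, Prod.fst_add, Prod.snd_add, Pi.add_apply]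
    rw [← Finset.sum_add_distrib]
    refine Finset.sum_congr rfl fun t _ => ?_
    rw [add_smul, add_smul]
    abel
  map_smul' c p := by
    simp only [dOp, Prod.smul_fst, Prod.smul_snd, Pi.smul_apply, smul_eq_mul, RingHom.id_apply]
    rw [Finset.smul_sum]
    refine Finset.sum_congr rfl fun t _ => ?_
    rw [smul_add, smul_smul, smul_smul]

/-- Symmetry of the form. -/
lemma Bform_comm (n : ℕ) (p q : (Fin n → ℂ) × (Fin n → ℂ)) : Bform n q p = Bform n p q :=
  Finset.sum_congr rfl fun t _ => by ring

/-- `Bform` as a bilinear map. -/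
noncomputable def Bl (n : ℕ) :
    ((Fin n → ℂ) × (Fin n → ℂ)) →ₗ[ℂ] ((Fin n → ℂ) × (Fin n → ℂ)) →ₗ[ℂ] ℂ :=
  LinearMap.mk₂ ℂ (Bform n)
    (fun p p' q => by
      simp only [Bform, Prod.fst_add, Prod.snd_add, Pi.add_apply]
      rw [← Finset.sum_add_distrib]
      exact Finset.sum_congr rfl fun t _ => by ring)
    (fun c p q => by
      simp only [Bform, Prod.smul_fst, Prod.smul_snd, Pi.smul_apply, smul_eq_mul]
      rw [Finset.mul_sum]
      exact Finset.sum_congr rfl fun t _ => by ring)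
    (fun p q q' => by
      simp only [Bform, Prod.fst_add, Prod.snd_add, Pi.add_apply]
      rw [← Finset.sum_add_distrib]
      exact Finset.sum_congr rfl fun t _ => by ring)
    (fun c p q => by
      simp only [Bform, Prod.smul_fst, Prod.smul_snd, Pi.smul_apply, smul_eq_mul]
      rw [Finset.mul_sum]
      exact Finset.sum_congr rfl fun t _ => by ring)

lemma Bl_apply (n : ℕ) (p q : (Fin n → ℂ) × (Fin n → ℂ)) : Bl n p q = Bform n p q := rfl

/-- the joint kernel of the operators coming from a maximal isotropic
subspace `V ⊆ ℂⁿ ⊕ ℂⁿ` is a one-dimensional subspace of `Λ(ℂⁿ)`. -/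
theorem jointKernel_of_maxIsotropic_one_dimensional
    (n : ℕ) (hn : 1 ≤ n) (V : Submodule ℂ ((Fin n → ℂ) × (Fin n → ℂ)))
    (hiso : ∀ p ∈ V, ∀ q ∈ V, Bform n p q = 0)
    (hdim : Module.finrank ℂ ↥V = n) :
    Module.finrank ℂ ↥(⨅ p ∈ V, LinearMap.ker (dOp n p)) = 1 := by
  classical
  -- basis of V
  let vb : Basis (Fin n) ℂ ↥V := (Module.finBasis ℂ ↥V).reindex (finCongr hdim)
  let v : Fin n → (Fin n → ℂ) × (Fin n → ℂ) := fun i => (vb i : (Fin n → ℂ) × (Fin n → ℂ))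
  have hvV : ∀ i, v i ∈ V := fun i => SetLike.coe_mem (vb i)
  -- dual functionals
  obtain ⟨W, hW⟩ := Submodule.exists_isCompl V
  let π := V.linearProjOfIsCompl W hW
  let φ : Fin n → (((Fin n → ℂ) × (Fin n → ℂ)) →ₗ[ℂ] ℂ) := fun j => (vb.coord j).comp π
  have hφv : ∀ i j, φ j (v i) = if i = j then 1 else 0 := by
    intro i j
    have hπ : π (v i) = vb i := Submodule.linearProjOfIsCompl_apply_left hW (vb i)
    simp only [φ, LinearMap.comp_apply, hπ, Basis.coord_apply, Basis.repr_self]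
    rw [Finsupp.single_apply]
  -- dual vectors
  let u : Fin n → (Fin n → ℂ) × (Fin n → ℂ) := fun j =>
    (fun t => φ j (0, Pi.single t 1), fun t => φ j (Pi.single t 1, 0))
  have hBu : ∀ (p : (Fin n → ℂ) × (Fin n → ℂ)) (j : Fin n), Bform n p (u j) = φ j p := by
    intro p j
    have hp : p = ∑ t, (p.1 t • ((Pi.single t 1 : Fin n → ℂ), (0 : Fin n → ℂ))
        + p.2 t • ((0 : Fin n → ℂ), (Pi.single t 1 : Fin n → ℂ))) := by
      refine Prod.ext ?_ ?_
      · rw [Prod.fst_sum]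
        simp only [Prod.fst_add, Prod.smul_fst, smul_zero, add_zero]
        funext s
        rw [Finset.sum_apply]
        simp [Pi.single_apply, mul_comm]
      · rw [Prod.snd_sum]
        simp only [Prod.snd_add, Prod.smul_snd, smul_zero, zero_add]
        funext s
        rw [Finset.sum_apply]
        simp [Pi.single_apply, mul_comm]
    conv_rhs => rw [hp]
    rw [map_sum, Bform]
    refine Finset.sum_congr rfl fun t _ => ?_
    rw [map_add, _root_.map_smul, _root_.map_smul]
    unfold u
    dsimp only
    simp only [smul_eq_mul]
    ring
  have hBvu : ∀ i j, Bform n (v i) (u j) = if i = j then 1 else 0 := by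
    intro i j; rw [hBu]; exact hφv i j
  -- correct u to make it isotropic
  let u' : Fin n → (Fin n → ℂ) × (Fin n → ℂ) := fun j =>
    u j - (1/2 : ℂ) • ∑ k, Bform n (u j) (u k) • v k
  have hBvv : ∀ i j, Bform n (v i) (v j) = 0 := fun i j => hiso _ (hvV i) _ (hvV j)
  have hBvu' : ∀ i j, Bform n (v i) (u' j) = if i = j then 1 else 0 := by
    intro i j
    rw [← Bl_apply]
    unfold u'
    rw [map_sub, _root_.map_smul, map_sum]
    simp only [_root_.map_smul, Bl_apply, smul_eq_mul]
    rw [show ∑ k, Bform n (u j) (u k) * Bform n (v i) (v k) = 0 by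
      refine Finset.sum_eq_zero fun k _ => by rw [hBvv, mul_zero]]
    rw [hBvu, mul_zero, sub_zero]
  have huu' : ∀ (x : (Fin n → ℂ) × (Fin n → ℂ)) (j : Fin n), Bform n x (u' j)
      = Bform n x (u j) - (1/2 : ℂ) * ∑ k, Bform n (u j) (u k) * Bform n x (v k) := by
    intro x j
    rw [← Bl_apply]
    unfold u'
    rw [map_sub, _root_.map_smul, map_sum]
    simp only [_root_.map_smul, Bl_apply, smul_eq_mul]
  have hBu'u' : ∀ i j, Bform n (u' i) (u' j) = 0 := by
    intro i j
    have hx2 : ∀ k, Bform n (u' i) (v k) = if k = i then 1 else 0 := fun k =>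
      (Bform_comm n (v k) (u' i)).trans (hBvu' k i)
    have hx3 : Bform n (u' i) (u j) = Bform n (u j) (u i) - (1/2 : ℂ) * Bform n (u i) (u j) := by
      rw [← Bform_comm n (u' i) (u j), huu' (u j) i]
      have hterm : ∀ k, Bform n (u j) (v k) = if k = j then 1 else 0 := fun k =>
        (Bform_comm n (v k) (u j)).trans (hBvu k j)
      have hs : (∑ k, Bform n (u i) (u k) * Bform n (u j) (v k)) = Bform n (u i) (u j) := by
        simp only [hterm, mul_ite, mul_one, mul_zero]
        simp
      rw [hs]
    rw [huu' (u' i) j, hx3]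
    have hs2 : (∑ k, Bform n (u j) (u k) * Bform n (u' i) (v k)) = Bform n (u j) (u i) := by
      simp only [hx2, mul_ite, mul_one, mul_zero]
      simp
    rw [hs2, Bform_comm n (u i) (u j)]
    ring
  -- CAR family attached to V and its dual family
  have hcar := aux_car_finrank (M := GA n) (fun i => dOp n (v i)) (fun i => dOp n (u' i))
    (fun i j x => by rw [aux_dAnti n (v i) (v j) x, hBvv i j, zero_smul])
    (fun i x => by
      have h := aux_dAnti n (u' i) (u' i) x
      rw [hBu'u' i i, zero_smul] at h
      have h2 : (2 : ℂ) • dOp n (u' i) (dOp n (u' i) x) = 0 := by rw [two_smul]; exact h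
      simpa using (smul_eq_zero.1 h2).resolve_left (by norm_num))
    (fun i j x => by
      rw [aux_dAnti n (v i) (u' j) x, hBvu' i j]
      by_cases h : i = j <;> simp [h])
  rw [GA_finrank_eq n] at hcar
  -- identify the joint kernels
  have hJeq : (⨅ p ∈ V, LinearMap.ker (dOp n p)) = ⨅ i, LinearMap.ker (dOp n (v i)) := by
    apply le_antisymm
    · exact le_iInf fun i => iInf₂_le (v i) (hvV i)
    · refine le_iInf₂ fun p hp => ?_
      intro x hx
      have hxi : ∀ i, dOp n (v i) x = 0 := by
        intro i
        exact LinearMap.mem_ker.1 ((Submodule.mem_iInf _).1 hx i)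
      rw [LinearMap.mem_ker]
      have hpsum : (⟨p, hp⟩ : ↥V) = ∑ i, vb.repr ⟨p, hp⟩ i • vb i := (vb.sum_repr _).symm
      have hpe : p = ∑ i, vb.repr ⟨p, hp⟩ i • v i := by
        have h := congrArg (Subtype.val) hpsum
        simp only [Submodule.coe_sum, Submodule.coe_smul] at h; exact h
      rw [hpe, show dOp n (∑ i, vb.repr ⟨p, hp⟩ i • v i)
          = dL n (∑ i, vb.repr ⟨p, hp⟩ i • v i) from rfl, map_sum]
      simp only [_root_.map_smul]
      rw [LinearMap.sum_apply]
      refine Finset.sum_eq_zero fun i _ => ?_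
      rw [LinearMap.smul_apply, show dL n (v i) = dOp n (v i) from rfl, hxi i, smul_zero]
  rw [hJeq]
  have hpow : 0 < 2 ^ n := Nat.pow_pos (by norm_num)
  have hmul : 2 ^ n * 1 = 2 ^ n * finrank ℂ ↥(⨅ i, LinearMap.ker (dOp n (v i))) := by
    rw [mul_one]; exact hcar
  exact (Nat.eq_of_mul_eq_mul_left hpow hmul).symm
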